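/- There is no isomorphism of Batalin-Vilkovisky algebras between H^{*+3}(LBSO(3);F₂) ≅ Λ(u₋₁,u₋₂) ⊗ F₂[v₂,v₃] (with BV operator as in Theorem 'BV-algebra for SO(3)', where 1 ∉ Im Δ) and the Hochschild cohomology HH*(H_*(SO(3);F₂), H_*(SO(3);F₂)) of the exterior algebra H_*(SO(3);F₂) = Λ(x₋₁,x₋₂) with its Frobenius BV structure (where 1 ∈ Im Δ). -/

import Mathlib

/-! **Statement 14.**  There is no isomorphism of Batalin-Vilkovisky algebras between
`H^{*+3}(LBSO(3);F₂) ≅ Λ(u₋₁,u₋₂) ⊗ F₂[v₂,v₃]` (with its BV operator `ΔL`, for which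
`1 ∉ Im ΔL`) and the Hochschild cohomology `HH^*(H_*(SO(3);F₂), H_*(SO(3);F₂))` of the exterior
algebra `H_*(SO(3);F₂) = Λ(x₋₁,x₋₂)` with its Frobenius BV operator `ΔH` (for which
`1 ∈ Im ΔH`, e.g. `ΔH(x₋₂y₃) = 1`).

Both underlying algebras are `A = Λ(a,b) ⊗ F₂[c,d]`, modelled as
`F₂[X₀,X₁,X₂,X₃]/(X₀², X₁²)`, with exterior generators `u₁ (= u₋₁ resp. x₋₁)`,
`u₂ (= u₋₂ resp. x₋₂)` and polynomial generators `v₂ (= v₂ resp. y₂)`, `v₃ (= v₃ resp. y₃)`.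
The BV operators are specified (linearly) on the monomial basis; since the BV identity and all
the defining formulas have no signs mod 2, this pins them down. -/

noncomputable section

abbrev A14 : Type :=
  MvPolynomial (Fin 4) (ZMod 2) ⧸
    Ideal.span {(MvPolynomial.X 0 : MvPolynomial (Fin 4) (ZMod 2)) ^ 2, MvPolynomial.X 1 ^ 2}

def g14 (i : Fin 4) : A14 := Ideal.Quotient.mk _ (MvPolynomial.X i)

/-- `u₋₁` (degree `-1` exterior generator). -/ def u₁ : A14 := g14 0
/-- `u₋₂` (degree `-2` exterior generator). -/ def u₂ : A14 := g14 1
/-- `v₂` (degree `2` polynomial generator). -/ def w₂ : A14 := g14 2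
/-- `v₃` (degree `3` polynomial generator). -/ def w₃ : A14 := g14 3

namespace Stmt14Aux

open MvPolynomial

abbrev R14 := MvPolynomial (Fin 4) (ZMod 2)
abbrev I14 : Ideal R14 := Ideal.span {(X 0 : R14) ^ 2, X 1 ^ 2}

def d₂ : Fin 4 →₀ ℕ := Finsupp.single 1 1 + Finsupp.single 2 1

def Λ14 : R14 →ₗ[ZMod 2] ZMod 2 := lcoeff (ZMod 2) 0 + lcoeff (ZMod 2) d₂

lemma ker_aux : ∀ x ∈ I14.restrictScalars (ZMod 2), Λ14 x = 0 := by
  intro x hx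
  rw [Submodule.restrictScalars_mem, Ideal.mem_span_pair] at hx
  obtain ⟨a, b, rfl⟩ := hx
  simp only [Λ14, LinearMap.add_apply, lcoeff_apply, coeff_add, X_pow_eq_monomial,
    coeff_mul_monomial']
  have h1 : ¬ Finsupp.single (0:Fin 4) 2 ≤ 0 := by simp [Finsupp.le_def]
  have h2 : ¬ Finsupp.single (1:Fin 4) 2 ≤ 0 := by simp [Finsupp.le_def]
  have h3 : ¬ Finsupp.single (0:Fin 4) 2 ≤ d₂ := by
    simp only [Finsupp.le_def, not_forall, not_le]
    exact ⟨0, by simp [d₂, Finsupp.single_apply]⟩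
  have h4 : ¬ Finsupp.single (1:Fin 4) 2 ≤ d₂ := by
    simp only [Finsupp.le_def, not_forall, not_le]
    exact ⟨1, by simp [d₂, Finsupp.single_apply]⟩
  rw [if_neg h1, if_neg h2, if_neg h3, if_neg h4]
  ring

def lam : A14 →ₗ[ZMod 2] ZMod 2 :=
  (Submodule.liftQ (I14.restrictScalars (ZMod 2)) Λ14 ker_aux).comp
    (Submodule.Quotient.restrictScalarsEquiv (ZMod 2) (I14 : Submodule R14 R14)).symm.toLinearMap

lemma lam_mk (p : R14) : lam (Ideal.Quotient.mk I14 p) = Λ14 p := rfl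

lemma mk_mono (a b i j : ℕ) :
    u₁ ^ a * u₂ ^ b * w₂ ^ i * w₃ ^ j
      = Ideal.Quotient.mk I14 (X 0 ^ a * X 1 ^ b * X 2 ^ i * X 3 ^ j) := by
  simp [u₁, u₂, w₂, w₃, g14, map_mul, map_pow]

lemma mono_eq (a b i j : ℕ) :
    (X 0 ^ a * X 1 ^ b * X 2 ^ i * X 3 ^ j : R14)
      = monomial (Finsupp.single 0 a + Finsupp.single 1 b
          + Finsupp.single 2 i + Finsupp.single 3 j) 1 := by
  simp [X_pow_eq_monomial, monomial_mul]

lemma e_eq_zero (a b i j : ℕ) :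
    (Finsupp.single (0:Fin 4) a + Finsupp.single 1 b + Finsupp.single 2 i + Finsupp.single 3 j
      = 0) ↔ a = 0 ∧ b = 0 ∧ i = 0 ∧ j = 0 := by
  constructor
  · intro h
    refine ⟨?_, ?_, ?_, ?_⟩
    · simpa [Finsupp.single_apply] using DFunLike.congr_fun h 0
    · simpa [Finsupp.single_apply] using DFunLike.congr_fun h 1
    · simpa [Finsupp.single_apply] using DFunLike.congr_fun h 2
    · simpa [Finsupp.single_apply] using DFunLike.congr_fun h 3
  · rintro ⟨rfl, rfl, rfl, rfl⟩; simp

lemma e_eq_d₂ (a b i j : ℕ) :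
    (Finsupp.single (0:Fin 4) a + Finsupp.single 1 b + Finsupp.single 2 i + Finsupp.single 3 j
      = d₂) ↔ a = 0 ∧ b = 1 ∧ i = 1 ∧ j = 0 := by
  constructor
  · intro h
    refine ⟨?_, ?_, ?_, ?_⟩
    · simpa [Finsupp.single_apply, d₂] using DFunLike.congr_fun h 0
    · simpa [Finsupp.single_apply, d₂] using DFunLike.congr_fun h 1
    · simpa [Finsupp.single_apply, d₂] using DFunLike.congr_fun h 2
    · simpa [Finsupp.single_apply, d₂] using DFunLike.congr_fun h 3
  · rintro ⟨rfl, rfl, rfl, rfl⟩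
    ext k; fin_cases k <;> simp [d₂, Finsupp.single_apply]

lemma lam_mono (a b i j : ℕ) :
    lam (u₁ ^ a * u₂ ^ b * w₂ ^ i * w₃ ^ j)
      = (if a = 0 ∧ b = 0 ∧ i = 0 ∧ j = 0 then 1 else 0)
        + (if a = 0 ∧ b = 1 ∧ i = 1 ∧ j = 0 then 1 else 0) := by
  rw [mk_mono, lam_mk, mono_eq]
  simp only [Λ14, LinearMap.add_apply, lcoeff_apply, coeff_monomial]
  simp only [e_eq_zero, e_eq_d₂]

lemma lamA (i j : ℕ) : lam (w₂ ^ i * w₃ ^ j) = if i = 0 ∧ j = 0 then 1 else 0 := by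
  have := lam_mono 0 0 i j
  simp only [pow_zero, one_mul] at this
  rw [this]; simp

lemma lamB (i j : ℕ) : lam (u₂ * w₂ ^ i * w₃ ^ j) = if i = 1 ∧ j = 0 then 1 else 0 := by
  have := lam_mono 0 1 i j
  simp only [pow_zero, pow_one, one_mul] at this
  rw [this]; simp

lemma lamC (i j : ℕ) : lam (u₁ * w₂ ^ i * w₃ ^ j) = 0 := by
  have := lam_mono 1 0 i j
  simp only [pow_zero, pow_one, one_mul, mul_one] at this
  rw [this]; simp

lemma lamD (i j : ℕ) : lam (u₁ * u₂ * w₂ ^ i * w₃ ^ j) = 0 := by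
  have := lam_mono 1 1 i j
  simp only [pow_one] at this
  rw [this]; simp

lemma lam_one : lam (1 : A14) = 1 := by
  have := lamA 0 0
  simpa using this

lemma u₁_sq : u₁ ^ 2 = 0 := by
  have h : (u₁ : A14) ^ 2 = Ideal.Quotient.mk I14 ((X 0 : R14) ^ 2) := by
    simp [u₁, g14, map_pow]
  rw [h, Ideal.Quotient.eq_zero_iff_mem]
  exact Ideal.subset_span (Set.mem_insert _ _)

lemma u₂_sq : u₂ ^ 2 = 0 := by
  have h : (u₂ : A14) ^ 2 = Ideal.Quotient.mk I14 ((X 1 : R14) ^ 2) := by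
    simp [u₂, g14, map_pow]
  rw [h, Ideal.Quotient.eq_zero_iff_mem]
  exact Ideal.subset_span (Set.mem_insert_of_mem _ rfl)

def S14 : Set A14 := {x | ∃ a b i j : ℕ, x = u₁ ^ a * u₂ ^ b * w₂ ^ i * w₃ ^ j}

lemma spanS : Submodule.span (ZMod 2) S14 = ⊤ := by
  rw [eq_top_iff]
  rintro z -
  obtain ⟨p, rfl⟩ := Ideal.Quotient.mk_surjective z
  induction p using MvPolynomial.induction_on' with
  | add p q hp hq => rw [map_add]; exact add_mem hp hq
  | monomial d r =>
    have hm : (monomial d r : R14)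
        = r • (X 0 ^ d 0 * X 1 ^ d 1 * X 2 ^ d 2 * X 3 ^ d 3) := by
      rw [monomial_eq, Finsupp.prod_fintype _ _ (fun i => pow_zero _),
        Fin.prod_univ_four, smul_eq_C_mul]
    have : (Ideal.Quotient.mk I14 (monomial d r) : A14)
        = r • (u₁ ^ d 0 * u₂ ^ d 1 * w₂ ^ d 2 * w₃ ^ d 3) := by
      rw [hm, mk_mono, ← Ideal.Quotient.mkₐ_eq_mk (ZMod 2) I14, map_smul]
    rw [this]
    exact Submodule.smul_mem _ _ (Submodule.subset_span ⟨_, _, _, _, rfl⟩)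

end Stmt14Aux

open Stmt14Aux

set_option maxHeartbeats 1000000 in
theorem stmt14 (ΔH ΔL : A14 →ₗ[ZMod 2] A14)
    -- the Hochschild (Frobenius) BV operator on HH^*(Λ(x₋₁,x₋₂)): trivial on
    -- `Λ(x₋₁,x₋₂) ⊗ 1` and on `1 ⊗ F₂[y₂,y₃]`, with
    -- `Δ(x₋₂y₃) = Δ(x₋₁y₂) = 1` and `Δ(x₋₂y₂) = Δ(x₋₁y₃) = 0`:
    (hH1 : ∀ i j : ℕ, ΔH (w₂ ^ i * w₃ ^ j) = 0)
    (hH2 : ΔH u₁ = 0 ∧ ΔH u₂ = 0 ∧ ΔH (u₁ * u₂) = 0)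
    (hH3 : ΔH (u₂ * w₃) = 1 ∧ ΔH (u₁ * w₂) = 1 ∧ ΔH (u₂ * w₂) = 0 ∧ ΔH (u₁ * w₃) = 0)
    -- the string-topology BV operator of `H^{*+3}(LBSO(3);F₂)` on the monomial basis:
    (hL1 : ∀ i j : ℕ, ΔL (w₂ ^ i * w₃ ^ j) = 0)
    (hL2 : ∀ i j : ℕ, ΔL (u₁ * u₂ * w₂ ^ i * w₃ ^ j)
      = (i : ZMod 2) • (u₂ * w₂ ^ (i - 1) * w₃ ^ j)
        + (j : ZMod 2) • (u₁ * w₂ ^ i * w₃ ^ (j - 1)))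
    (hL3 : ∀ i j : ℕ, ΔL (u₂ * w₂ ^ i * w₃ ^ j)
      = (i : ZMod 2) • (u₁ * w₂ ^ (i - 1) * w₃ ^ j)
        + (j : ZMod 2) • (w₂ ^ i * w₃ ^ (j - 1))
        + (j : ZMod 2) • (u₂ * w₂ ^ (i + 1) * w₃ ^ (j - 1))
        + (j : ZMod 2) • (u₁ * u₂ * w₂ ^ i * w₃ ^ j))
    (hL4 : ∀ i j : ℕ, ΔL (u₁ * w₂ ^ i * w₃ ^ j)
      = (i : ZMod 2) • (w₂ ^ (i - 1) * w₃ ^ j)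
        + ((i + j : ℕ) : ZMod 2) • (u₂ * w₂ ^ i * w₃ ^ j)
        + (i : ZMod 2) • (u₁ * u₂ * w₂ ^ (i - 1) * w₃ ^ (j + 1))
        + (j : ZMod 2) • (u₁ * w₂ ^ (i + 1) * w₃ ^ (j - 1))) :
    -- there is no BV-algebra isomorphism (algebra isomorphism commuting with the BV operators)
    -- from the Hochschild side to the string-topology side:
    ¬ ∃ φ : A14 ≃ₐ[ZMod 2] A14, ∀ z : A14, φ (ΔH z) = ΔL (φ z) := by
  rintro ⟨φ, hφ⟩
  have key : ∀ z : A14, lam (ΔL z) = 0 := by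
    intro z
    have hz : z ∈ Submodule.span (ZMod 2) S14 := by
      rw [spanS]; exact Submodule.mem_top
    induction hz using Submodule.span_induction with
    | zero => rw [map_zero, map_zero]
    | add x y _ _ hx hy => rw [map_add, map_add, hx, hy, add_zero]
    | smul c x _ hx => rw [map_smul, map_smul, hx, smul_zero]
    | mem x hx =>
      obtain ⟨a, b, i, j, rfl⟩ := hx
      rcases a with _ | _ | a
      · rcases b with _ | _ | b
        · simp only [pow_zero, one_mul]
          rw [hL1, map_zero]
        · simp only [zero_add, pow_zero, pow_one, one_mul]
          rw [hL3, map_add, map_add, map_add, map_smul, map_smul, map_smul, map_smul,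
            lamA, lamB, lamC, lamD]
          simp only [smul_eq_mul, mul_zero, add_zero, zero_add, mul_ite, mul_one,
            Nat.add_eq_right]
          split_ifs with h1
          · exact CharTwo.add_self_eq_zero _
          · simp
        · have h0 : (u₂ : A14) ^ (b + 1 + 1) = 0 := by
            rw [show b + 1 + 1 = b + 2 from rfl, pow_add, u₂_sq, mul_zero]
          rw [h0, mul_zero, zero_mul, zero_mul, map_zero, map_zero]
      · rcases b with _ | _ | b
        · simp only [zero_add, pow_zero, pow_one, one_mul, mul_one]
          rw [hL4, map_add, map_add, map_add, map_smul, map_smul, map_smul, map_smul,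
            lamA, lamB, lamC, lamD]
          simp only [smul_eq_mul, mul_zero, add_zero, zero_add, mul_ite, mul_one]
          split_ifs with h1 h2 h2
          · obtain ⟨rfl, rfl⟩ := h2; decide
          · have hi : i = 0 := by omega
            subst hi
            obtain ⟨-, rfl⟩ := h1
            simp
          · exact absurd ⟨by omega, h2.2⟩ h1
          · simp
        · simp only [zero_add, pow_one]
          rw [hL2, map_add, map_smul, map_smul, lamB, lamC]
          simp only [smul_eq_mul, mul_zero, add_zero, mul_ite, mul_one]
          split_ifs with h1
          · have : i = 2 := by omega
            subst this
            obtain ⟨-, rfl⟩ := h1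
            decide
          · simp
        · have h0 : (u₂ : A14) ^ (b + 1 + 1) = 0 := by
            rw [show b + 1 + 1 = b + 2 from rfl, pow_add, u₂_sq, mul_zero]
          rw [h0, mul_zero, zero_mul, zero_mul, map_zero, map_zero]
      · have h0 : (u₁ : A14) ^ (a + 1 + 1) = 0 := by
          rw [show a + 1 + 1 = a + 2 from rfl, pow_add, u₁_sq, mul_zero]
        rw [h0, zero_mul, zero_mul, zero_mul, map_zero, map_zero]
  have h1 := hφ (u₂ * w₃)
  rw [hH3.1, map_one] at h1
  have h2 := key (φ (u₂ * w₃))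
  rw [← h1, lam_one] at h2
  exact one_ne_zero h2

end
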